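/- Let A be a real square matrix that is Hurwitz stable (every eigenvalue has negative real part), and let B be a real matrix such that B Bᵀ is positive definite. Then there exists a unique symmetric positive definite matrix P satisfying the Lyapunov equation A P + P Aᵀ + B Bᵀ = 0, given by P = ∫₀^∞ e^{tA} B Bᵀ e^{tAᵀ} dt. -/

import Mathlib

open Matrix MeasureTheory
open scoped NNReal ENNReal

attribute [local instance] Matrix.linftyOpNormedAddCommGroup Matrix.linftyOpNormedRing
  Matrix.linftyOpNormedAlgebra

section Helpers

variable {N : ℕ}

/-- exp of a complex matrix is a polynomial in the matrix. -/
lemma exp_mem_adjoin (C : Matrix (Fin N) (Fin N) ℂ) :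
    ∃ q : Polynomial ℂ, Polynomial.aeval C q = NormedSpace.exp C := by
  have hS : IsClosed ((Subalgebra.toSubmodule (Algebra.adjoin ℂ ({C} : Set _))) :
      Set (Matrix (Fin N) (Fin N) ℂ)) :=
    Submodule.closed_of_finiteDimensional (Subalgebra.toSubmodule (Algebra.adjoin ℂ ({C} : Set _)))
  have hmem : NormedSpace.exp C ∈ Algebra.adjoin ℂ ({C} : Set _) := by
    have hsum := NormedSpace.expSeries_summable' (𝕂 := ℂ) C
    have htend := (NormedSpace.exp_series_hasSum_exp' (𝕂 := ℂ) C).tendsto_sum_nat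
    have hexp : NormedSpace.exp C = ∑' n : ℕ, ((n.factorial : ℂ)⁻¹ • C ^ n) := by
      rw [NormedSpace.exp_eq_tsum ℂ]
    have : NormedSpace.exp C ∈ closure ((Subalgebra.toSubmodule
        (Algebra.adjoin ℂ ({C} : Set _))) : Set _) := by
      refine mem_closure_of_tendsto htend (Filter.Eventually.of_forall fun n => ?_)
      refine Submodule.sum_mem _ fun i _ => Submodule.smul_mem _ _ ?_
      exact Subalgebra.pow_mem _ (Algebra.self_mem_adjoin_singleton ℂ C) i
    rwa [hS.closure_eq] at this
  rwa [Algebra.adjoin_singleton_eq_range_aeval, AlgHom.mem_range] at hmem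

lemma exp_mulVec_eigenvector {C : Matrix (Fin N) (Fin N) ℂ} {μ : ℂ} {v : Fin N → ℂ}
    (hv : C *ᵥ v = μ • v) :
    NormedSpace.exp C *ᵥ v = Complex.exp μ • v := by
  classical
  have hpow : ∀ n : ℕ, (C ^ n) *ᵥ v = μ ^ n • v := by
    intro n
    induction n with
    | zero => simp
    | succ n ih =>
      rw [pow_succ', pow_succ', ← Matrix.mulVec_mulVec, ih, Matrix.mulVec_smul, hv,
        smul_smul, mul_comm]
  let L : Matrix (Fin N) (Fin N) ℂ →ₗ[ℂ] (Fin N → ℂ) :=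
    { toFun := fun M => M *ᵥ v
      map_add' := fun M₁ M₂ => Matrix.add_mulVec M₁ M₂ v
      map_smul' := fun c M => (Matrix.smul_mulVec c M v) }
  have hL : NormedSpace.exp C *ᵥ v = L.toContinuousLinearMap (NormedSpace.exp C) := rfl
  rw [hL, NormedSpace.exp_eq_tsum ℂ, L.toContinuousLinearMap.map_tsum
    (NormedSpace.expSeries_summable' (𝕂 := ℂ) C)]
  have : ∀ n : ℕ, L.toContinuousLinearMap ((n.factorial : ℂ)⁻¹ • C ^ n)
      = ((n.factorial : ℂ)⁻¹ * μ ^ n) • v := by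
    intro n
    show ((n.factorial : ℂ)⁻¹ • C ^ n) *ᵥ v = _
    rw [Matrix.smul_mulVec, hpow, smul_smul]
  have hscal : (∑' n : ℕ, (n.factorial : ℂ)⁻¹ * μ ^ n) = Complex.exp μ := by
    rw [Complex.exp_eq_exp_ℂ, NormedSpace.exp_eq_tsum ℂ]
    exact tsum_congr fun n => by simp [smul_eq_mul]
  rw [tsum_congr this, Summable.tsum_smul_const, hscal]
  exact (NormedSpace.expSeries_summable' (𝕂 := ℂ) μ).congr fun n => by simp [smul_eq_mul]

lemma spectrum_exp_subset (C : Matrix (Fin N) (Fin N) ℂ) (hN : 0 < N) :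
    spectrum ℂ (NormedSpace.exp C) ⊆ Complex.exp '' spectrum ℂ C := by
  classical
  obtain ⟨q, hq⟩ := exp_mem_adjoin C
  have : Nontrivial (Matrix (Fin N) (Fin N) ℂ) := by
    have : Nonempty (Fin N) := ⟨⟨0, hN⟩⟩
    infer_instance
  have hne : (spectrum ℂ C).Nonempty :=
    spectrum.nonempty_of_isAlgClosed_of_finiteDimensional ℂ C
  intro μ hμ
  rw [← hq, spectrum.map_polynomial_aeval_of_nonempty C q hne] at hμ
  obtain ⟨lam, hlam, hql⟩ := hμ
  refine ⟨lam, hlam, ?_⟩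
  -- eigenvector
  have hev : Module.End.HasEigenvalue (Matrix.toLinAlgEquiv' C) lam := by
    rw [Module.End.hasEigenvalue_iff_mem_spectrum]
    rwa [AlgEquiv.spectrum_eq (Matrix.toLinAlgEquiv' : Matrix (Fin N) (Fin N) ℂ ≃ₐ[ℂ] _) C]
  obtain ⟨v, hv⟩ := hev.exists_hasEigenvector
  have hCv : C *ᵥ v = lam • v := by
    have := hv.apply_eq_smul
    rwa [Matrix.toLinAlgEquiv'_apply] at this
  have h1 : Polynomial.aeval C q *ᵥ v = q.eval lam • v := by
    have h0 := Module.End.aeval_apply_of_hasEigenvector (p := q) hv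
    have h2 : Polynomial.aeval (Matrix.toLinAlgEquiv' C) q
        = Matrix.toLinAlgEquiv' (Polynomial.aeval C q) :=
      Polynomial.aeval_algHom_apply
        (Matrix.toLinAlgEquiv' : Matrix (Fin N) (Fin N) ℂ ≃ₐ[ℂ] _) C q
    rw [h2] at h0
    rwa [Matrix.toLinAlgEquiv'_apply] at h0
  rw [hq, exp_mulVec_eigenvector hCv] at h1
  have := hv.right
  rw [← hql]
  by_contra hne'
  exact this (by
    have := sub_eq_zero.mpr h1
    rw [← sub_smul] at this
    exact (smul_eq_zero.mp this).resolve_left (sub_ne_zero.mpr hne') )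

lemma entry_nnnorm_le (M : Matrix (Fin N) (Fin N) ℝ) (i j : Fin N) : ‖M i j‖₊ ≤ ‖M‖₊ := by
  rw [Matrix.linfty_opNNNorm_def]
  refine le_trans ?_ (Finset.le_sup (f := fun i => ∑ j, ‖M i j‖₊) (Finset.mem_univ i))
  exact Finset.single_le_sum (f := fun j => ‖M i j‖₊) (fun k _ => zero_le) (Finset.mem_univ j)

lemma nnnorm_transpose_le (M : Matrix (Fin N) (Fin N) ℝ) : ‖Mᵀ‖₊ ≤ N * ‖M‖₊ := by
  rw [Matrix.linfty_opNNNorm_def (A := Mᵀ)]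
  apply Finset.sup_le
  intro i _
  calc ∑ j, ‖Mᵀ i j‖₊ ≤ ∑ _j : Fin N, ‖M‖₊ :=
        Finset.sum_le_sum fun j _ => entry_nnnorm_le M j i
    _ = N * ‖M‖₊ := by simp [Finset.sum_const, mul_comm]

lemma norm_transpose_le (M : Matrix (Fin N) (Fin N) ℝ) : ‖Mᵀ‖ ≤ N * ‖M‖ := by
  have := nnnorm_transpose_le M
  exact_mod_cast this

lemma nnnorm_map_ofReal (M : Matrix (Fin N) (Fin N) ℝ) :
    ‖M.map (Complex.ofReal)‖₊ = ‖M‖₊ := by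
  simp [Matrix.linfty_opNNNorm_def, Matrix.map_apply]

lemma exp_map_ofReal (M : Matrix (Fin N) (Fin N) ℝ) :
    (NormedSpace.exp M).map (Complex.ofReal)
      = NormedSpace.exp (M.map (Complex.ofReal)) := by
  have hcont : Continuous fun X : Matrix (Fin N) (Fin N) ℝ =>
      (Complex.ofRealHom.mapMatrix : Matrix (Fin N) (Fin N) ℝ →+* _) X := by
    apply continuous_matrix
    intro i j
    exact Complex.continuous_ofReal.comp ((continuous_apply_apply i j))
  have := NormedSpace.map_exp (Complex.ofRealHom.mapMatrix : Matrix (Fin N) (Fin N) ℝ →+* _) hcont M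
  exact this

lemma norm_exp_pow_le (A : Matrix (Fin N) (Fin N) ℝ) (hA : ∀ μ ∈ spectrum ℂ
    (A.map (Complex.ofReal)), μ.re < 0) (hN : 0 < N) :
    ∃ r : ℝ≥0, 0 < r ∧ r < 1 ∧ ∃ n₀ : ℕ, ∀ n ≥ n₀,
      ‖NormedSpace.exp A ^ n‖₊ ≤ r ^ n := by
  classical
  set C := A.map (Complex.ofReal) with hC
  have : Nonempty (Fin N) := ⟨⟨0, hN⟩⟩
  set E := NormedSpace.exp C with hE
  have hspec : ∀ μ ∈ spectrum ℂ E, ‖μ‖₊ < 1 := by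
    intro μ hμ
    obtain ⟨lam, hlam, rfl⟩ := spectrum_exp_subset C hN hμ
    have habs : ‖Complex.exp lam‖ = Real.exp lam.re := Complex.norm_exp lam
    have hlt : Real.exp lam.re < 1 := Real.exp_lt_one_iff.mpr (hA lam hlam)
    rw [← NNReal.coe_lt_coe]
    simpa [nnnorm, habs] using hlt
  have hfin : (spectrum ℂ E).Finite := Matrix.finite_spectrum _
  have hnonempty : (spectrum ℂ E).Nonempty :=
    spectrum.nonempty_of_isAlgClosed_of_finiteDimensional ℂ _
  obtain ⟨μ₀, hμ₀mem, hμ₀max⟩ := Set.exists_max_image _ (fun μ => ‖μ‖₊) hfin hnonempty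
  have hmax : ∀ μ ∈ spectrum ℂ E, ‖μ‖₊ ≤ ‖μ₀‖₊ := by
    intro μ hμ
    rcases le_total ‖μ‖₊ ‖μ₀‖₊ with h | h
    · exact h
    · exact hμ₀max μ hμ
  set r : ℝ≥0 := (‖μ₀‖₊ + 1) / 2 with hr
  have hμ₀lt : ‖μ₀‖₊ < 1 := hspec μ₀ hμ₀mem
  have hrpos : 0 < r := by positivity
  have hrlt1 : r < 1 := by
    rw [hr, div_lt_one (by norm_num : (0:ℝ≥0) < 2)]
    calc ‖μ₀‖₊ + 1 < 1 + 1 := by exact add_lt_add_left hμ₀lt 1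
    _ = 2 := by norm_num
  have hμ₀r : ‖μ₀‖₊ < r := by
    rw [hr, lt_div_iff₀ (by norm_num : (0:ℝ≥0) < 2)]
    calc ‖μ₀‖₊ * 2 = ‖μ₀‖₊ + ‖μ₀‖₊ := by ring
    _ < ‖μ₀‖₊ + 1 := add_lt_add_right hμ₀lt _
  have hradius : spectralRadius ℂ E < (r : ℝ≥0∞) := by
    have h1 : spectralRadius ℂ E ≤ (‖μ₀‖₊ : ℝ≥0∞) := by
      apply iSup₂_le
      intro μ hμ
      exact_mod_cast hmax μ hμ
    exact lt_of_le_of_lt h1 (by exact_mod_cast hμ₀r)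
  have htend := spectrum.pow_nnnorm_pow_one_div_tendsto_nhds_spectralRadius E
  have hev : ∀ᶠ n : ℕ in Filter.atTop,
      (‖E ^ n‖₊ : ℝ≥0∞) ^ (1 / (n:ℝ)) < (r : ℝ≥0∞) :=
    htend.eventually_lt_const hradius
  obtain ⟨n₀, hn₀⟩ := Filter.eventually_atTop.mp hev
  refine ⟨r, hrpos, hrlt1, max n₀ 1, fun n hn => ?_⟩
  have hn1 : 1 ≤ n := le_trans (le_max_right _ _) hn
  have hnn : (0:ℝ) < n := by exact_mod_cast hn1
  have h2 := hn₀ n (le_trans (le_max_left _ _) hn)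
  have hx : (((‖E ^ n‖₊ : ℝ≥0∞)) ^ (1/(n:ℝ))) ^ (n:ℝ) = (‖E ^ n‖₊ : ℝ≥0∞) := by
    rw [← ENNReal.rpow_mul, one_div, inv_mul_cancel₀ (ne_of_gt hnn), ENNReal.rpow_one]
  have h3 : (‖E ^ n‖₊ : ℝ≥0∞) < (r : ℝ≥0∞) ^ (n : ℝ) :=
    hx ▸ ENNReal.rpow_lt_rpow h2 hnn
  have h4 : ‖E ^ n‖₊ ≤ r ^ n := by
    have := le_of_lt h3
    rw [ENNReal.rpow_natCast, ← ENNReal.coe_pow, ENNReal.coe_le_coe] at this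
    exact this
  have h5 : ‖E ^ n‖₊ = ‖NormedSpace.exp A ^ n‖₊ := by
    have hmp : ((NormedSpace.exp A) ^ n).map Complex.ofReal
        = ((NormedSpace.exp A).map Complex.ofReal) ^ n := by
      exact
        map_pow (Complex.ofRealHom.mapMatrix : Matrix (Fin N) (Fin N) ℝ →+* _)
          (NormedSpace.exp A) n
    rw [hE, ← exp_map_ofReal, ← hmp]
    exact nnnorm_map_ofReal _
  rwa [h5] at h4

lemma exp_smul_decay (A : Matrix (Fin N) (Fin N) ℝ) (hA : ∀ μ ∈ spectrum ℂ
    (A.map (Complex.ofReal)), μ.re < 0) :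
    ∃ c ε : ℝ, 0 < c ∧ 0 < ε ∧ ∀ t : ℝ, 0 ≤ t →
      ‖NormedSpace.exp (t • A)‖ ≤ c * Real.exp (-(ε * t)) := by
  rcases Nat.eq_zero_or_pos N with hN | hN
  · subst hN
    haveI : IsEmpty (Fin 0) := Fin.isEmpty
    haveI : Subsingleton (Matrix (Fin 0) (Fin 0) ℝ) :=
      ⟨fun a b => by ext i; exact absurd i.2 (Nat.not_lt_zero _)⟩
    refine ⟨1, 1, one_pos, one_pos, fun t ht => ?_⟩
    rw [Subsingleton.elim (NormedSpace.exp (t • A)) 0, norm_zero, one_mul]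
    positivity
  obtain ⟨r, hr0, hr1, n₀, hn₀⟩ := norm_exp_pow_le A hA hN
  set ρ : ℝ := (r : ℝ) with hρ
  have hρ0 : 0 < ρ := hr0
  have hρ1 : ρ < 1 := hr1
  set ε : ℝ := -Real.log ρ with hε
  have hε0 : 0 < ε := by
    rw [hε, neg_pos]
    exact Real.log_neg hρ0 hρ1
  -- continuity and compact bound
  have hcont : Continuous fun s : ℝ => NormedSpace.exp (s • A) :=
    NormedSpace.exp_continuous.comp (continuous_id.smul continuous_const)
  obtain ⟨K, hK⟩ := (isCompact_Icc (a := (0:ℝ)) (b := (n₀ : ℝ) + 1)).exists_bound_of_continuousOn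
    hcont.continuousOn
  set K' : ℝ := max K 1 with hK'
  have hK'1 : (1:ℝ) ≤ K' := le_max_right _ _
  have hK'0 : (0:ℝ) < K' := lt_of_lt_of_le one_pos hK'1
  have hKb : ∀ s ∈ Set.Icc (0:ℝ) ((n₀:ℝ)+1), ‖NormedSpace.exp (s • A)‖ ≤ K' :=
    fun s hs => le_trans (hK s hs) (le_max_left _ _)
  refine ⟨K' * Real.exp ε * Real.exp (ε * ((n₀:ℝ)+1)), ε, by positivity, hε0, fun t ht => ?_⟩
  set n : ℕ := ⌊t⌋₊ with hn
  have hnt : (n : ℝ) ≤ t := Nat.floor_le ht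
  have htn : t < (n : ℝ) + 1 := Nat.lt_floor_add_one t
  have hsplit : NormedSpace.exp (t • A)
      = NormedSpace.exp ((t - n) • A) * NormedSpace.exp A ^ n := by
    rw [← Matrix.exp_nsmul, ← Matrix.exp_add_of_commute, ← Nat.cast_smul_eq_nsmul ℝ n A,
      ← add_smul, sub_add_cancel]
    exact ((Commute.refl A).smul_left _).smul_right _
  have hnorm1 : ‖NormedSpace.exp (t • A)‖
      ≤ ‖NormedSpace.exp ((t - n) • A)‖ * ‖NormedSpace.exp A ^ n‖ := by
    rw [hsplit]; exact norm_mul_le _ _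
  by_cases hcase : n₀ ≤ n
  · -- large t
    have h1 : ‖NormedSpace.exp ((t - n) • A)‖ ≤ K' := by
      apply hKb
      constructor
      · linarith
      · have : (0:ℝ) ≤ n₀ := Nat.cast_nonneg _
        linarith
    have h2 : ‖NormedSpace.exp A ^ n‖ ≤ ρ ^ n := hn₀ n hcase
    have h3 : ρ ^ n = Real.exp ((n : ℝ) * Real.log ρ) := by
      rw [Real.exp_nat_mul, Real.exp_log hρ0]
    have h4 : (n : ℝ) * Real.log ρ ≤ (t - 1) * Real.log ρ := by
      apply mul_le_mul_of_nonpos_right _ (le_of_lt (Real.log_neg hρ0 hρ1))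
      linarith
    have h5 : ρ ^ n ≤ Real.exp ε * Real.exp (-(ε * t)) := by
      rw [h3, ← Real.exp_add]
      apply Real.exp_le_exp.mpr
      rw [hε]
      ring_nf
      nlinarith [h4]
    calc ‖NormedSpace.exp (t • A)‖ ≤ K' * (ρ ^ n) := by
          refine le_trans hnorm1 ?_
          exact mul_le_mul h1 h2 (norm_nonneg _) (le_of_lt hK'0)
      _ ≤ K' * (Real.exp ε * Real.exp (-(ε * t))) :=
          mul_le_mul_of_nonneg_left h5 (le_of_lt hK'0)
      _ ≤ K' * Real.exp ε * Real.exp (ε * ((n₀:ℝ)+1)) * Real.exp (-(ε * t)) := by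
          have h6 : (1:ℝ) ≤ Real.exp (ε * ((n₀:ℝ)+1)) := by
            apply Real.one_le_exp
            positivity
          have h7 : K' * (Real.exp ε * Real.exp (-(ε * t)))
              = K' * Real.exp ε * Real.exp (-(ε * t)) * 1 := by ring
          have h8 : K' * Real.exp ε * Real.exp (-(ε * t)) * 1
              ≤ K' * Real.exp ε * Real.exp (-(ε * t)) * Real.exp (ε * ((n₀:ℝ)+1)) := by
            apply mul_le_mul_of_nonneg_left h6
            positivity
          rw [h7]
          exact le_trans h8 (le_of_eq (by ring))
  · -- small t
    push_neg at hcase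
    have htsmall : t ≤ (n₀ : ℝ) + 1 := by
      have : (n:ℝ) + 1 ≤ (n₀:ℝ) + 1 := by
        have : (n:ℝ) ≤ (n₀ : ℝ) := by exact_mod_cast le_of_lt hcase
        linarith
      linarith
    have h1 : ‖NormedSpace.exp (t • A)‖ ≤ K' := hKb t ⟨ht, htsmall⟩
    have h2 : K' ≤ K' * Real.exp ε * Real.exp (ε * ((n₀:ℝ)+1)) * Real.exp (-(ε * t)) := by
      have e1 : (1:ℝ) ≤ Real.exp ε := Real.one_le_exp (le_of_lt hε0)
      have e3 : (1:ℝ) ≤ Real.exp (ε * ((n₀:ℝ)+1)) * Real.exp (-(ε * t)) := by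
        rw [← Real.exp_add]
        apply Real.one_le_exp
        have e2 : ε * t ≤ ε * ((n₀:ℝ)+1) :=
          mul_le_mul_of_nonneg_left htsmall (le_of_lt hε0)
        linarith
      calc K' = K' * 1 := by ring
        _ ≤ K' * (Real.exp (ε * ((n₀:ℝ)+1)) * Real.exp (-(ε * t))) :=
            mul_le_mul_of_nonneg_left e3 (le_of_lt hK'0)
        _ ≤ (K' * Real.exp ε) * (Real.exp (ε * ((n₀:ℝ)+1)) * Real.exp (-(ε * t))) := by
            apply mul_le_mul_of_nonneg_right _ (by positivity)
            nlinarith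
        _ = K' * Real.exp ε * Real.exp (ε * ((n₀:ℝ)+1)) * Real.exp (-(ε * t)) := by ring
    exact le_trans h1 h2

end Helpers

/-- A real square matrix is Hurwitz if every complex eigenvalue has negative real part. -/
def IsHurwitz {N : ℕ} (A : Matrix (Fin N) (Fin N) ℝ) : Prop :=
  ∀ μ ∈ spectrum ℂ (A.map (Complex.ofReal)), μ.re < 0

theorem stmt3 {N M : ℕ}
    (A : Matrix (Fin N) (Fin N) ℝ) (B : Matrix (Fin N) (Fin M) ℝ)
    (hA : IsHurwitz A) (hB : (B * Bᵀ).PosDef) :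
    let P : Matrix (Fin N) (Fin N) ℝ :=
      ∫ t in Set.Ioi (0 : ℝ),
        NormedSpace.exp (t • A) * (B * Bᵀ) * NormedSpace.exp (t • Aᵀ)
    P.IsSymm ∧ P.PosDef ∧ A * P + P * Aᵀ + B * Bᵀ = 0 ∧
      ∀ P' : Matrix (Fin N) (Fin N) ℝ,
        P'.IsSymm → P'.PosDef → A * P' + P' * Aᵀ + B * Bᵀ = 0 → P' = P := by
  intro P
  classical
  letI : ContinuousENorm (Matrix (Fin N) (Fin N) ℝ) := SeminormedAddGroup.toContinuousENorm
  letI : TopologicalSpace.PseudoMetrizableSpace (Matrix (Fin N) (Fin N) ℝ) :=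
    inferInstanceAs (TopologicalSpace.PseudoMetrizableSpace (Fin N → Fin N → ℝ))
  obtain ⟨c, ε, hc, hε, hdecay⟩ := exp_smul_decay A hA
  set Q : Matrix (Fin N) (Fin N) ℝ := B * Bᵀ with hQ
  have hQsym : Qᵀ = Q := by rw [hQ, Matrix.transpose_mul, Matrix.transpose_transpose]
  set F : Matrix (Fin N) (Fin N) ℝ → ℝ → Matrix (Fin N) (Fin N) ℝ :=
    fun X t => NormedSpace.exp (t • A) * X * NormedSpace.exp (t • Aᵀ) with hF
  have hexpT : ∀ t : ℝ, NormedSpace.exp (t • Aᵀ) = (NormedSpace.exp (t • A))ᵀ := by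
    intro t; rw [← Matrix.transpose_smul, Matrix.exp_transpose]
  have hcontF : ∀ X, Continuous (F X) := by
    intro X
    have h1 : Continuous fun t : ℝ => NormedSpace.exp (t • A) :=
      NormedSpace.exp_continuous.comp (continuous_id.smul continuous_const)
    have h2 : Continuous fun t : ℝ => NormedSpace.exp (t • Aᵀ) :=
      NormedSpace.exp_continuous.comp (continuous_id.smul continuous_const)
    exact (h1.mul continuous_const).mul h2
  have hF0 : ∀ X, F X 0 = X := by
    intro X
    rw [hF]
    simp [NormedSpace.exp_zero]
  have hboundF : ∀ (X : Matrix (Fin N) (Fin N) ℝ), ∀ t : ℝ, 0 ≤ t →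
      ‖F X t‖ ≤ ((N:ℝ) * c^2 * ‖X‖) * Real.exp (-(2*ε) * t) := by
    intro X t ht
    have h1 := hdecay t ht
    have h2 : ‖NormedSpace.exp (t • Aᵀ)‖ ≤ (N:ℝ) * ‖NormedSpace.exp (t • A)‖ := by
      rw [hexpT]; exact norm_transpose_le _
    have hexp0 : (0:ℝ) ≤ Real.exp (-(ε*t)) := le_of_lt (Real.exp_pos _)
    calc ‖F X t‖ ≤ ‖NormedSpace.exp (t • A) * X‖ * ‖NormedSpace.exp (t • Aᵀ)‖ :=
          norm_mul_le _ _
      _ ≤ (‖NormedSpace.exp (t • A)‖ * ‖X‖) * ‖NormedSpace.exp (t • Aᵀ)‖ :=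
          mul_le_mul_of_nonneg_right (norm_mul_le _ _) (norm_nonneg _)
      _ ≤ (‖NormedSpace.exp (t • A)‖ * ‖X‖) * ((N:ℝ) * ‖NormedSpace.exp (t • A)‖) :=
          mul_le_mul_of_nonneg_left h2 (by positivity)
      _ = (N:ℝ) * ‖X‖ * (‖NormedSpace.exp (t • A)‖ * ‖NormedSpace.exp (t • A)‖) := by ring
      _ ≤ (N:ℝ) * ‖X‖ * ((c * Real.exp (-(ε*t))) * (c * Real.exp (-(ε*t)))) := by
          apply mul_le_mul_of_nonneg_left _ (by positivity)
          exact mul_le_mul h1 h1 (norm_nonneg _) (by positivity)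
      _ = ((N:ℝ) * c^2 * ‖X‖) * (Real.exp (-(ε*t)) * Real.exp (-(ε*t))) := by ring
      _ = ((N:ℝ) * c^2 * ‖X‖) * Real.exp (-(2*ε) * t) := by
          rw [← Real.exp_add]; ring_nf
  have hintF : ∀ X, IntegrableOn (F X) (Set.Ioi (0:ℝ)) := by
    intro X
    have hig : IntegrableOn (fun t : ℝ => ((N:ℝ) * c^2 * ‖X‖) * Real.exp (-(2*ε) * t))
        (Set.Ioi (0:ℝ)) := by
      have := (exp_neg_integrableOn_Ioi 0 (by positivity : (0:ℝ) < 2*ε))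
      exact this.const_mul _
    refine Integrable.mono hig ((hcontF X).aestronglyMeasurable.restrict) ?_
    rw [ae_restrict_iff' measurableSet_Ioi]
    refine Filter.Eventually.of_forall fun t ht => ?_
    have hb := hboundF X t (le_of_lt ht)
    have : ‖((N:ℝ) * c^2 * ‖X‖) * Real.exp (-(2*ε) * t)‖
        = ((N:ℝ) * c^2 * ‖X‖) * Real.exp (-(2*ε) * t) := by
      rw [Real.norm_eq_abs, abs_of_nonneg (by positivity)]
    rw [this]
    exact hb
  have htendF : ∀ X, Filter.Tendsto (F X) Filter.atTop (nhds 0) := by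
    intro X
    apply squeeze_zero_norm' (Filter.eventually_atTop.mpr
      ⟨0, fun t ht => hboundF X t ht⟩)
    have h1 : Filter.Tendsto (fun t : ℝ => (2*ε) * t) Filter.atTop Filter.atTop :=
      Filter.Tendsto.const_mul_atTop (by positivity) Filter.tendsto_id
    have h2 : Filter.Tendsto (fun t : ℝ => Real.exp (-(2*ε) * t)) Filter.atTop (nhds 0) := by
      have := Real.tendsto_exp_neg_atTop_nhds_zero.comp h1
      refine this.congr fun t => ?_
      simp [neg_mul]
    have := h2.const_mul ((N:ℝ) * c^2 * ‖X‖)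
    simpa using this
  have hderivF : ∀ (X : Matrix (Fin N) (Fin N) ℝ) (t : ℝ),
      HasDerivAt (F X) (A * F X t + F X t * Aᵀ) t := by
    intro X t
    have h1 : HasDerivAt (fun u : ℝ => NormedSpace.exp (u • A))
        (A * NormedSpace.exp (t • A)) t := hasDerivAt_exp_smul_const' A t
    have h2 : HasDerivAt (fun u : ℝ => NormedSpace.exp (u • Aᵀ))
        (NormedSpace.exp (t • Aᵀ) * Aᵀ) t := hasDerivAt_exp_smul_const Aᵀ t
    have h3 := (h1.mul_const X).mul h2
    convert h3 using 1
    · rfl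
    · rfl
    · rfl
    show A * F X t + F X t * Aᵀ = A * NormedSpace.exp (t • A) * X * NormedSpace.exp (t • Aᵀ)
      + NormedSpace.exp (t • A) * X * (NormedSpace.exp (t • Aᵀ) * Aᵀ)
    rw [hF]
    noncomm_ring
    rfl
  -- the key integral identity
  have hkey : ∀ X : Matrix (Fin N) (Fin N) ℝ,
      A * (∫ t in Set.Ioi (0:ℝ), F X t) + (∫ t in Set.Ioi (0:ℝ), F X t) * Aᵀ = - X := by
    intro X
    have hLint : Integrable (fun t => A * F X t) (volume.restrict (Set.Ioi (0:ℝ))) :=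
      ((LinearMap.mulLeft ℝ A).toContinuousLinearMap).integrable_comp (hintF X)
    have hRint : Integrable (fun t => F X t * Aᵀ) (volume.restrict (Set.Ioi (0:ℝ))) :=
      ((LinearMap.mulRight ℝ Aᵀ).toContinuousLinearMap).integrable_comp (hintF X)
    have h0 : ∫ t in Set.Ioi (0:ℝ), (A * F X t + F X t * Aᵀ) = 0 - F X 0 :=
      integral_Ioi_of_hasDerivAt_of_tendsto ((hcontF X).continuousWithinAt)
        (fun x _ => hderivF X x) (hLint.add hRint) (htendF X)
    rw [hF0 X, zero_sub] at h0
    rw [integral_add hLint hRint] at h0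
    have hL : ∫ t in Set.Ioi (0:ℝ), A * F X t = A * ∫ t in Set.Ioi (0:ℝ), F X t := by
      have := ContinuousLinearMap.integral_comp_comm
        ((LinearMap.mulLeft ℝ A).toContinuousLinearMap) (hintF X)
      exact this
    have hR : ∫ t in Set.Ioi (0:ℝ), F X t * Aᵀ = (∫ t in Set.Ioi (0:ℝ), F X t) * Aᵀ := by
      have := ContinuousLinearMap.integral_comp_comm
        ((LinearMap.mulRight ℝ Aᵀ).toContinuousLinearMap) (hintF X)
      exact this
    rw [hL, hR] at h0
    exact h0
  have hPint : P = ∫ t in Set.Ioi (0:ℝ), F Q t := rfl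
  refine ⟨?_, ?_, ?_, ?_⟩
  · -- symmetry
    show Pᵀ = P
    have hT := ContinuousLinearMap.integral_comp_comm
      ((Matrix.transposeLinearEquiv (Fin N) (Fin N) ℝ ℝ).toLinearMap.toContinuousLinearMap)
      (hintF Q)
    have hTT : ∫ t in Set.Ioi (0:ℝ), (F Q t)ᵀ = Pᵀ := by exact hT
    rw [← hTT, hPint]
    apply setIntegral_congr_fun measurableSet_Ioi
    intro t _
    show (F Q t)ᵀ = F Q t
    rw [hF]
    simp only [Matrix.transpose_mul, hQsym, ← hexpT, Matrix.transpose_transpose]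
    rw [hexpT t, Matrix.transpose_transpose, mul_assoc]
  · -- positive definiteness
    have hsym : Pᵀ = P := by
      have hT := ContinuousLinearMap.integral_comp_comm
        ((Matrix.transposeLinearEquiv (Fin N) (Fin N) ℝ ℝ).toLinearMap.toContinuousLinearMap)
        (hintF Q)
      have hTT : ∫ t in Set.Ioi (0:ℝ), (F Q t)ᵀ = Pᵀ := by exact hT
      rw [← hTT, hPint]
      apply setIntegral_congr_fun measurableSet_Ioi
      intro t _
      show (F Q t)ᵀ = F Q t
      simp only [hF]
      simp only [Matrix.transpose_mul, hQsym, ← hexpT, Matrix.transpose_transpose]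
      rw [hexpT t, Matrix.transpose_transpose, mul_assoc]
    rw [Matrix.posDef_iff_dotProduct_mulVec]
    constructor
    · show Pᴴ = P
      have : Pᴴ = Pᵀ := by
        ext i j
        simp [Matrix.conjTranspose_apply]
      rw [this, hsym]
    · intro x hx
      let L : Matrix (Fin N) (Fin N) ℝ →ₗ[ℝ] ℝ :=
        { toFun := fun M => x ⬝ᵥ (M *ᵥ x)
          map_add' := by
            intro M₁ M₂
            show x ⬝ᵥ ((M₁ + M₂) *ᵥ x) = x ⬝ᵥ (M₁ *ᵥ x) + x ⬝ᵥ (M₂ *ᵥ x)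
            rw [Matrix.add_mulVec, dotProduct_add]
          map_smul' := by
            intro r M'
            show x ⬝ᵥ ((r • M') *ᵥ x) = r * (x ⬝ᵥ (M' *ᵥ x))
            rw [Matrix.smul_mulVec, dotProduct_smul]
            rfl }
      have hquad : x ⬝ᵥ (P *ᵥ x) = ∫ t in Set.Ioi (0:ℝ), x ⬝ᵥ (F Q t *ᵥ x) := by
        have := ContinuousLinearMap.integral_comp_comm (L.toContinuousLinearMap) (hintF Q)
        have h2 : L.toContinuousLinearMap (∫ t in Set.Ioi (0:ℝ), F Q t)
            = x ⬝ᵥ (P *ᵥ x) := by rw [← hPint]; rfl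
        rw [← h2]
        exact this.symm
      have hpos : ∀ t ∈ Set.Ioi (0:ℝ), 0 < x ⬝ᵥ (F Q t *ᵥ x) := by
        intro t _
        set y : Fin N → ℝ := NormedSpace.exp (t • Aᵀ) *ᵥ x with hy
        have hyx : x ⬝ᵥ (F Q t *ᵥ x) = y ⬝ᵥ (Q *ᵥ y) := by
          simp only [hF]
          rw [← Matrix.mulVec_mulVec, ← Matrix.mulVec_mulVec, Matrix.dotProduct_mulVec x,
            hy, hexpT, Matrix.mulVec_transpose]
        have hyne : y ≠ 0 := by
          intro h0
          apply hx
          have hinj : Function.Injective (NormedSpace.exp (t • Aᵀ)).mulVec :=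
            Matrix.mulVec_injective_iff_isUnit.mpr (Matrix.isUnit_exp _)
          have h00 : NormedSpace.exp (t • Aᵀ) *ᵥ x = NormedSpace.exp (t • Aᵀ) *ᵥ 0 := by
            rw [Matrix.mulVec_zero]
            exact h0
          exact hinj h00
        have := (Matrix.posDef_iff_dotProduct_mulVec.mp hB).2 hyne
        rw [star_trivial] at this
        rw [hyx]
        exact this
      have hintq : IntegrableOn (fun t => x ⬝ᵥ (F Q t *ᵥ x)) (Set.Ioi (0:ℝ)) := by
        have := (L.toContinuousLinearMap).integrable_comp (hintF Q)
        exact this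
      have hnonneg : 0 ≤ᵐ[volume.restrict (Set.Ioi (0:ℝ))] fun t => x ⬝ᵥ (F Q t *ᵥ x) :=
        (ae_restrict_iff' measurableSet_Ioi).mpr
          (Filter.Eventually.of_forall fun t ht => le_of_lt (hpos t ht))
      have hsupp : Set.Ioi (0:ℝ) ⊆ Function.support fun t => x ⬝ᵥ (F Q t *ᵥ x) :=
        fun t ht => ne_of_gt (hpos t ht)
      rw [star_trivial, hquad]
      rw [setIntegral_pos_iff_support_of_nonneg_ae hnonneg hintq]
      rw [Set.inter_eq_self_of_subset_right hsupp, Real.volume_Ioi]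
      exact ENNReal.zero_lt_top
  · -- Lyapunov equation
    have := hkey Q
    rw [← hPint] at this
    rw [this]
    simp
  · -- uniqueness
    intro P' _ _ hP'
    have hPeq : A * P + P * Aᵀ + Q = 0 := by
      have := hkey Q
      rw [← hPint] at this
      rw [this]; simp
    set D : Matrix (Fin N) (Fin N) ℝ := P' - P with hD
    have hDeq : A * D + D * Aᵀ = 0 := by
      have h1 : A * P' + P' * Aᵀ + Q = 0 := hP'
      rw [hD]
      rw [mul_sub, sub_mul]
      have : A * P' - A * P + (P' * Aᵀ - P * Aᵀ)
          = (A * P' + P' * Aᵀ + Q) - (A * P + P * Aᵀ + Q) := by noncomm_ring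
      rw [this, h1, hPeq, sub_zero]
    -- F D is constant with derivative zero
    have hderiv0 : ∀ t : ℝ, HasDerivAt (F D) 0 t := by
      intro t
      have h1 := hderivF D t
      have h2 : A * F D t + F D t * Aᵀ = 0 := by
        have hcomm : A * NormedSpace.exp (t • A) = NormedSpace.exp (t • A) * A := by
          have : Commute A (t • A) := (Commute.refl A).smul_right t
          exact this.exp_right |>.eq
        have hcommT : Aᵀ * NormedSpace.exp (t • Aᵀ) = NormedSpace.exp (t • Aᵀ) * Aᵀ := by
          have : Commute Aᵀ (t • Aᵀ) := (Commute.refl Aᵀ).smul_right t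
          exact this.exp_right |>.eq
        have e1 : A * F D t
            = NormedSpace.exp (t • A) * (A * D) * NormedSpace.exp (t • Aᵀ) := by
          simp only [hF]
          simp only [mul_assoc]
          rw [← mul_assoc, hcomm, mul_assoc]
        have e2 : F D t * Aᵀ
            = NormedSpace.exp (t • A) * (D * Aᵀ) * NormedSpace.exp (t • Aᵀ) := by
          simp only [hF]
          simp only [mul_assoc]
          rw [hcommT]
        rw [e1, e2, ← add_mul, ← mul_add, hDeq, mul_zero, zero_mul]
      rw [← h2]
      exact h1
    have hconst : ∀ t : ℝ, F D t = F D 0 := by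
      intro t
      have : ∀ s : ℝ, HasDerivAt (F D) ((fun _ => (0 : Matrix (Fin N) (Fin N) ℝ)) s) s :=
        fun s => hderiv0 s
      exact is_const_of_deriv_eq_zero
        (fun s => (hderiv0 s).differentiableAt)
        (fun s => (hderiv0 s).deriv) t 0
    have hD0 : D = 0 := by
      have h1 : Filter.Tendsto (F D) Filter.atTop (nhds (F D 0)) := by
        have heq : F D = fun _ : ℝ => F D 0 := funext hconst
        rw [heq]
        exact tendsto_const_nhds
      have h2 := htendF D
      have := tendsto_nhds_unique h1 h2
      rw [hF0 D] at this
      exact this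
    rw [hD] at hD0
    rw [sub_eq_zero] at hD0
    exact hD0
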